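/- Every finite cyclic group C_N is the absolute center of some finite group, i.e. for every positive integer N there exists a finite group H with L(H) ≅ C_N. -/

import Mathlib

/-- The absolute center of a group: the set of elements fixed by every automorphism. -/
def absoluteCenter (G : Type*) [Group G] : Subgroup G where
  carrier := {g | ∀ φ : G ≃* G, φ g = g}
  one_mem' := fun φ => map_one φ
  mul_mem' := fun {x y} hx hy φ => by rw [map_mul, hx φ, hy φ]
  inv_mem' := fun {x} hx φ => by rw [map_inv, hx φ]

namespace AbsCenterProof
open SemidirectProduct Multiplicative Subgroup Finset

/-- A semidirect product is equivalent, as a type, to the product. -/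
def sdpEquivProd {G H : Type*} [Group G] [Group H] (f : H →* MulAut G) :
    SemidirectProduct G H f ≃ G × H where
  toFun g := (g.left, g.right)
  invFun q := ⟨q.1, q.2⟩
  left_inv g := by cases g; rfl
  right_inv q := rfl

noncomputable instance {G H : Type*} [Group G] [Group H] [Fintype G] [Fintype H]
    (f : H →* MulAut G) : Fintype (SemidirectProduct G H f) :=
  Fintype.ofEquiv _ (sdpEquivProd f).symm

lemma isCyclic_zpowers {G : Type*} [Group G] (g : G) : IsCyclic (zpowers g) := by
  refine ⟨⟨⟨g, mem_zpowers g⟩, fun x => ?_⟩⟩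
  obtain ⟨k, hk⟩ := mem_zpowers_iff.mp x.2
  exact mem_zpowers_iff.mpr ⟨k, Subtype.ext (by simpa using hk)⟩

lemma conj_inl {G H : Type*} [CommGroup G] [Group H] {f : H →* MulAut G}
    (g : SemidirectProduct G H f) (n : G) :
    g * inl n * g⁻¹ = inl (f g.right n) := by
  ext
  · simp [mul_left, inv_left, mul_right, left_inl, right_inl]
  · simp [mul_right, inv_right, right_inl]

variable (N p : ℕ) (r : (ZMod p)ˣ)

/-- The hom `ZMod (N^2) →+ Additive (ZMod p)ˣ`, `t ↦ r ^ t`. -/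
noncomputable def uhomAdd (h1 : r ^ (N ^ 2) = 1) : ZMod (N ^ 2) →+ Additive (ZMod p)ˣ :=
  ZMod.lift _ ⟨zmultiplesHom _ (Additive.ofMul r), by
    simp [zmultiplesHom_apply, ← ofMul_zpow]; exact_mod_cast h1⟩

/-- `t ↦ r ^ t` as a monoid hom. -/
noncomputable def uhom (h1 : r ^ (N ^ 2) = 1) :
    Multiplicative (ZMod (N ^ 2)) →* (ZMod p)ˣ :=
  AddMonoidHom.toMultiplicativeLeft (uhomAdd N p r h1)

lemma uhom_apply (h1 : r ^ (N ^ 2) = 1) [NeZero (N ^ 2)] (t : ZMod (N ^ 2)) :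
    uhom N p r h1 (ofAdd t) = r ^ t.val := by
  have ht : ((t.val : ℤ) : ZMod (N ^ 2)) = t := by
    push_cast
    simp [ZMod.natCast_val, ZMod.cast_id]
  conv_lhs => rw [← ht]
  rw [uhom, AddMonoidHom.coe_toMultiplicativeLeft]
  show Additive.toMul (uhomAdd N p r h1 ((t.val : ℤ) : ZMod (N ^ 2))) = _
  rw [uhomAdd, ZMod.lift_coe]
  show Additive.toMul ((t.val : ℤ) • Additive.ofMul r) = r ^ t.val
  rw [← ofMul_zpow, toMul_ofMul, zpow_natCast]

/-- Units act as automorphisms of `Multiplicative (ZMod p)`. -/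
def unitAut : (ZMod p)ˣ →* MulAut (Multiplicative (ZMod p)) where
  toFun u := AddEquiv.toMultiplicative (DistribMulAction.toAddAut (ZMod p)ˣ (ZMod p) u)
  map_one' := by ext x; exact congrArg ofAdd (one_smul (ZMod p)ˣ (toAdd x))
  map_mul' u v := by ext x; exact congrArg ofAdd (mul_smul u v (toAdd x))

/-- The action for the semidirect product. -/
noncomputable def ψ (h1 : r ^ (N ^ 2) = 1) :
    Multiplicative (ZMod (N ^ 2)) →* MulAut (Multiplicative (ZMod p)) :=
  (unitAut p).comp (uhom N p r h1)

lemma ψ_apply (h1 : r ^ (N ^ 2) = 1) (y : Multiplicative (ZMod (N ^ 2)))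
    (x : Multiplicative (ZMod p)) :
    ψ N p r h1 y x = ofAdd ((uhom N p r h1 y : ZMod p) * toAdd x) := rfl

/-- The witness group. -/
abbrev HH (h1 : r ^ (N ^ 2) = 1) :=
  SemidirectProduct (Multiplicative (ZMod p)) (Multiplicative (ZMod (N ^ 2))) (ψ N p r h1)

lemma pow_mk (h1 : r ^ (N ^ 2) = 1) (u : ZMod p) (w : ZMod (N ^ 2)) (n : ℕ) :
    (⟨ofAdd u, ofAdd w⟩ : HH N p r h1) ^ n =
      ⟨ofAdd ((∑ i ∈ range n, ((uhom N p r h1 (ofAdd w) : ZMod p)) ^ i) * u),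
       ofAdd ((n : ZMod (N ^ 2)) * w)⟩ := by
  induction n with
  | zero =>
      ext : 1
      · show (1 : Multiplicative (ZMod p)) = ofAdd _
        simp
      · show (1 : Multiplicative (ZMod (N ^ 2))) = ofAdd _
        simp
  | succ n ih =>
      conv_lhs => rw [pow_succ, ih]
      have hw : ofAdd ((n : ZMod (N ^ 2)) * w) = (ofAdd w) ^ n := by
        rw [← ofAdd_nsmul, nsmul_eq_mul]
      ext : 1
      · rw [mul_left, ψ_apply, hw, map_pow]
        show ofAdd _ * ofAdd _ = _
        rw [← ofAdd_add, Units.val_pow_eq_pow_val, sum_range_succ, add_mul]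
        rfl
      · rw [mul_right]
        show ofAdd _ * ofAdd _ = _
        rw [← ofAdd_add]
        congr 1
        push_cast
        ring


theorem key (hN : 1 < N) [hp : Fact p.Prime] (hpN : ¬ p ∣ N)
    (hr : orderOf r = N) (h1 : r ^ (N ^ 2) = 1) :
    ∃ z : HH N p r h1, absoluteCenter (HH N p r h1) = zpowers z ∧ orderOf z = N := by
  haveI : NeZero (N ^ 2) := ⟨by positivity⟩
  haveI : Fact (1 < N ^ 2) := ⟨by nlinarith⟩
  haveI : Fact (1 < p) := ⟨hp.out.one_lt⟩
  set z : HH N p r h1 := inr (ofAdd (N : ZMod (N ^ 2))) with hzdef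
  set b : HH N p r h1 := inr (ofAdd (1 : ZMod (N ^ 2))) with hbdef
  set a : HH N p r h1 := inl (ofAdd (1 : ZMod p)) with hadef
  have hNlt : N < N ^ 2 := by nlinarith
  have hu1 : uhom N p r h1 (ofAdd (1 : ZMod (N ^ 2))) = r := by
    rw [uhom_apply, ZMod.val_one, pow_one]
  have hRne : ((r : ZMod p)) ≠ 1 := by
    intro h
    rw [Units.val_eq_one.mp h, orderOf_one] at hr
    omega
  have hzsum : (∑ i ∈ range N, (r : ZMod p) ^ i) = 0 := by
    have h := geom_sum_mul (r : ZMod p) N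
    have hxN : (r : ZMod p) ^ N = 1 := by
      rw [← Units.val_pow_eq_pow_val, ← hr, pow_orderOf_eq_one, Units.val_one]
    rw [hxN, sub_self] at h
    rcases mul_eq_zero.mp h with h' | h'
    · exact h'
    · exact absurd (sub_eq_zero.mp h') hRne
  have hmk : ∀ g : HH N p r h1, g = ⟨ofAdd (toAdd g.left), ofAdd (toAdd g.right)⟩ := by
    intro g; cases g; rfl
  have hane : a ≠ 1 := by
    intro h
    have h2 : (ofAdd (1 : ZMod p)) = (1 : Multiplicative (ZMod p)) :=
      inl_injective (by simpa using h)
    exact one_ne_zero (α := ZMod p) (congrArg toAdd h2)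
  -- z is fixed by every automorphism
  have hzmem : z ∈ absoluteCenter (HH N p r h1) := by
    intro φ
    -- φ a lies in the left factor
    have hap : a ^ p = 1 := by
      rw [hadef, ← map_pow, ← ofAdd_nsmul, nsmul_eq_mul, mul_one, ZMod.natCast_self,
        ofAdd_zero, map_one]
    have hr1 : (φ a).right = 1 := by
      have h2 : rightHom (φ a) ^ p = 1 := by
        rw [← map_pow, ← map_pow, hap, map_one, map_one]
      have h3 : rightHom (φ a) ^ (N ^ 2) = 1 := by
        rw [← ofAdd_toAdd (rightHom (φ a)), ← ofAdd_nsmul, nsmul_eq_mul, ZMod.natCast_self,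
          zero_mul, ofAdd_zero]
      have hcop : Nat.Coprime p (N ^ 2) :=
        (Nat.Prime.coprime_iff_not_dvd hp.out).mpr hpN |>.pow_right 2
      have h4 : orderOf (rightHom (φ a)) ∣ Nat.gcd p (N ^ 2) :=
        Nat.dvd_gcd (orderOf_dvd_of_pow_eq_one h2) (orderOf_dvd_of_pow_eq_one h3)
      rw [hcop] at h4
      exact orderOf_eq_one_iff.mp (Nat.eq_one_of_dvd_one h4 ▸ rfl)
    have hφa : φ a = inl ((φ a).left) := by
      conv_lhs => rw [← inl_left_mul_inr_right (φ a)]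
      rw [show (φ a).right = 1 from hr1, map_one, mul_one]
    have hξ : toAdd ((φ a).left) ≠ 0 := by
      intro h0
      apply hane
      apply φ.injective
      rw [map_one, hφa, ← ofAdd_toAdd ((φ a).left), h0, ofAdd_zero, map_one]
    -- the conjugation relation
    have hconj : b * a * b⁻¹ = inl (ofAdd ((r : ZMod p))) := by
      rw [hadef, conj_inl, hbdef, right_inr, ψ_apply, hu1, toAdd_ofAdd, mul_one]
    have haR : inl (ofAdd ((r : ZMod p))) = a ^ ((r : ZMod p)).val := by
      rw [hadef, ← map_pow, ← ofAdd_nsmul, nsmul_eq_mul, mul_one, ZMod.natCast_val,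
        ZMod.cast_id]
    set m := (toAdd ((φ b).right)).val with hmdef
    have hrel : inl ((φ a).left ^ ((r : ZMod p)).val) =
        (inl (ψ N p r h1 ((φ b).right) ((φ a).left)) : HH N p r h1) := by
      calc (inl ((φ a).left ^ ((r : ZMod p)).val) : HH N p r h1)
          = (inl ((φ a).left)) ^ ((r : ZMod p)).val := map_pow _ _ _
        _ = (φ a) ^ ((r : ZMod p)).val := by rw [← hφa]
        _ = φ (a ^ ((r : ZMod p)).val) := (map_pow φ a _).symm
        _ = φ (b * a * b⁻¹) := by rw [hconj, haR]
        _ = φ b * φ a * (φ b)⁻¹ := by rw [map_mul, map_mul, map_inv]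
        _ = φ b * inl ((φ a).left) * (φ b)⁻¹ := by rw [← hφa]
        _ = inl (ψ N p r h1 ((φ b).right) ((φ a).left)) := conj_inl (φ b) _
    have heq : (r : ZMod p) * toAdd ((φ a).left) = ((r ^ m : (ZMod p)ˣ) : ZMod p) * toAdd ((φ a).left) := by
      have h5 := inl_injective hrel
      have h6 := congrArg toAdd h5
      rw [ψ_apply, toAdd_ofAdd, ← ofAdd_toAdd ((φ a).left), ← ofAdd_nsmul, toAdd_ofAdd,
        nsmul_eq_mul, ZMod.natCast_val, ZMod.cast_id, ← ofAdd_toAdd ((φ b).right),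
        uhom_apply] at h6
      exact h6
    have hrm : r ^ m = r ^ 1 := by
      have := mul_right_cancel₀ hξ heq.symm
      rw [pow_one]
      exact Units.ext this
    have hm : m ≡ 1 [MOD N] := by rw [← hr]; exact pow_eq_pow_iff_modEq.mp hrm
    have hm1 : 1 ≤ m := by
      rcases Nat.eq_zero_or_pos m with h0 | h
      · exfalso
        have h2 : m % N = 1 % N := hm
        rw [h0, Nat.zero_mod, Nat.mod_eq_of_lt hN] at h2
        omega
      · exact h
    obtain ⟨t, ht⟩ := (Nat.modEq_iff_dvd' hm1).mp hm.symm
    have hmt : m = N * t + 1 := by omega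
    have hub : uhom N p r h1 ((φ b).right) = r := by
      rw [← ofAdd_toAdd ((φ b).right), uhom_apply, ← hmdef, hrm, pow_one]
    have hbz : b ^ N = z := by
      rw [hbdef, hzdef, show (inr (ofAdd (1 : ZMod (N ^ 2))) : HH N p r h1)
          = ⟨ofAdd 0, ofAdd (1 : ZMod (N ^ 2))⟩ from by ext <;> simp, pow_mk]
      ext : 1
      · show ofAdd _ = (1 : Multiplicative (ZMod p))
        rw [mul_zero, ofAdd_zero]
      · show ofAdd _ = ofAdd _
        rw [mul_one]
    have hNN : ((N : ZMod (N ^ 2))) ^ 2 = 0 := by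
      rw [← Nat.cast_pow, ZMod.natCast_self]
    have hsecond : (N : ZMod (N ^ 2)) * toAdd ((φ b).right) = (N : ZMod (N ^ 2)) := by
      have hy : toAdd ((φ b).right) = ((m : ℕ) : ZMod (N ^ 2)) := by
        rw [hmdef, ZMod.natCast_val, ZMod.cast_id]
      rw [hy, hmt]
      push_cast
      linear_combination (t : ZMod (N ^ 2)) * hNN
    calc φ z = φ (b ^ N) := by rw [hbz]
      _ = (φ b) ^ N := map_pow φ b N
      _ = z := by
          have hub' : uhom N p r h1 (ofAdd (toAdd ((φ b).right))) = r := by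
            rw [ofAdd_toAdd]; exact hub
          rw [hmk (φ b), pow_mk]
          ext : 1
          · show ofAdd _ = (1 : Multiplicative (ZMod p))
            rw [hub', hzsum, zero_mul, ofAdd_zero]
          · show ofAdd _ = ofAdd _
            rw [hsecond]
  -- the absolute center is contained in the center
  have hLcen : absoluteCenter (HH N p r h1) ≤ Subgroup.center _ := by
    intro h hh
    rw [Subgroup.mem_center_iff]
    intro g
    have h2 := hh (MulAut.conj g)
    rw [MulAut.conj_apply] at h2
    conv_rhs => rw [← h2]
    group
  -- the center is contained in the powers of z
  have hcenz : Subgroup.center (HH N p r h1) ≤ zpowers z := by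
    intro h hh
    rw [Subgroup.mem_center_iff] at hh
    obtain ⟨x, y⟩ := h
    have e1 := congrArg SemidirectProduct.left (hh ⟨ofAdd (1 : ZMod p), 1⟩)
    have e2 := congrArg SemidirectProduct.left (hh ⟨1, ofAdd (1 : ZMod (N ^ 2))⟩)
    rw [mul_left, mul_left] at e1 e2
    simp only [map_one, MulAut.one_apply] at e1
    have e1' := congrArg toAdd e1
    rw [ψ_apply, ← ofAdd_toAdd x, ← ofAdd_add, ← ofAdd_add, toAdd_ofAdd, toAdd_ofAdd] at e1'
    -- e1' : 1 + toAdd x = toAdd x + uhom y * 1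
    have huy : ((uhom N p r h1 y : (ZMod p)ˣ) : ZMod p) = 1 := by
      have h3 : (1 : ZMod p) + toAdd x
          = toAdd x + (uhom N p r h1 y : ZMod p) * toAdd (ofAdd (1 : ZMod p)) := e1'
      rw [toAdd_ofAdd, mul_one] at h3
      linear_combination -h3
    have hNdvd : N ∣ (toAdd y).val := by
      have h4 : r ^ (toAdd y).val = 1 := by
        rw [← ofAdd_toAdd y, uhom_apply] at huy
        exact Units.val_eq_one.mp huy
      have h5 := orderOf_dvd_of_pow_eq_one h4
      rwa [hr] at h5
    have e2a : (1 : Multiplicative (ZMod p)) * (ψ N p r h1 (ofAdd (1 : ZMod (N ^ 2)))) x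
        = x * (ψ N p r h1 y) (1 : Multiplicative (ZMod p)) := e2
    simp only [one_mul, map_one, mul_one] at e2a
    rw [ψ_apply, hu1] at e2a
    have e2' : (r : ZMod p) * toAdd x = toAdd x := by
      have := congrArg toAdd e2a
      rwa [toAdd_ofAdd] at this
    have hx0 : toAdd x = 0 := by
      have h3 : ((r : ZMod p) - 1) * toAdd x = 0 := by linear_combination e2'
      rcases mul_eq_zero.mp h3 with h' | h'
      · exact (hRne (sub_eq_zero.mp h')).elim
      · exact h'
    have hx1 : x = 1 := by rw [← ofAdd_toAdd x, hx0, ofAdd_zero]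
    obtain ⟨s, hs⟩ := hNdvd
    rw [mem_zpowers_iff]
    refine ⟨(s : ℤ), ?_⟩
    rw [zpow_natCast, hzdef, show (inr (ofAdd (N : ZMod (N ^ 2))) : HH N p r h1)
        = ⟨ofAdd 0, ofAdd (N : ZMod (N ^ 2))⟩ from by ext <;> simp, pow_mk]
    ext : 1
    · show ofAdd _ = x
      rw [mul_zero, ofAdd_zero, hx1]
    · show ofAdd _ = y
      rw [← ofAdd_toAdd y]
      congr 1
      have h5 : toAdd y = (((toAdd y).val : ℕ) : ZMod (N ^ 2)) := by
        rw [ZMod.natCast_val, ZMod.cast_id]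
      rw [h5, hs]
      push_cast
      ring
  refine ⟨z, le_antisymm (hLcen.trans hcenz) (zpowers_le.mpr hzmem), ?_⟩
  rw [hzdef, orderOf_injective inr inr_injective, orderOf_ofAdd_eq_addOrderOf,
    ZMod.addOrderOf_coe _ (NeZero.ne _),
    show (N ^ 2).gcd N = N from by rw [Nat.gcd_comm]; exact Nat.gcd_eq_left ⟨N, pow_two N⟩,
    pow_two, Nat.mul_div_cancel _ (by omega : 0 < N)]

end AbsCenterProof

theorem cyclic_completely_L_realisable_exists (N : ℕ) (hN : 0 < N) :
    ∃ (H : Type) (_ : Group H) (_ : Fintype H),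
      Nonempty (absoluteCenter H ≃* Multiplicative (ZMod N)) := by
  rcases eq_or_lt_of_le (show 1 ≤ N from hN) with h1 | hN1
  · -- N = 1
    refine ⟨Multiplicative (ZMod 1), inferInstance, inferInstance, ?_⟩
    haveI : IsCyclic (absoluteCenter (Multiplicative (ZMod 1))) := isCyclic_of_subsingleton
    haveI : IsCyclic (Multiplicative (ZMod N)) := by
      rw [← h1]; exact isCyclic_of_subsingleton
    exact ⟨mulEquivOfCyclicCardEq (by
      rw [Nat.card_of_subsingleton (1 : absoluteCenter (Multiplicative (ZMod 1)))]
      rw [← h1, Nat.card_of_subsingleton (1 : Multiplicative (ZMod 1))])⟩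
  · -- N ≥ 2
    obtain ⟨p, hp, hlt, hmod⟩ := Nat.exists_prime_gt_modEq_one (k := N) N (by omega)
    haveI : Fact p.Prime := ⟨hp⟩
    haveI : NeZero (N ^ 2) := ⟨by positivity⟩
    have hple : 1 ≤ p := hp.one_lt.le.trans' (by omega)
    have hdvd : N ∣ p - 1 := (Nat.modEq_iff_dvd' hp.one_lt.le).mp hmod.symm
    have hpN : ¬ p ∣ N := fun h => absurd (Nat.le_of_dvd (by omega) h) (by omega)
    obtain ⟨g, hg⟩ := IsCyclic.exists_ofOrder_eq_natCard (α := (ZMod p)ˣ)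
    have hcard : Nat.card (ZMod p)ˣ = p - 1 := by
      rw [Nat.card_eq_fintype_card, ZMod.card_units_eq_totient, Nat.totient_prime hp]
    rw [hcard] at hg
    have hp1 : 0 < p - 1 := by
      have := Nat.le_of_dvd ?_ hdvd
      · omega
      · omega
    set r := g ^ ((p - 1) / N) with hrdef
    have hr : orderOf r = N := by
      rw [hrdef, orderOf_pow, hg, Nat.gcd_eq_right (Nat.div_dvd_of_dvd hdvd),
        Nat.div_div_self hdvd (by omega)]
    have h1 : r ^ (N ^ 2) = 1 := by
      rw [pow_two, pow_mul, ← hr, pow_orderOf_eq_one, one_pow]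
    obtain ⟨z, hL, hoz⟩ := AbsCenterProof.key N p r hN1 hpN hr h1
    refine ⟨AbsCenterProof.HH N p r h1, inferInstance, inferInstance, ?_⟩
    have hc : Nat.card (Subgroup.zpowers z) = N := by rw [Nat.card_zpowers, hoz]
    have e : (Subgroup.zpowers z) ≃* Multiplicative (ZMod N) := by
      have e0 := (zmodCyclicMulEquiv (AbsCenterProof.isCyclic_zpowers z)).symm
      rwa [hc] at e0
    exact ⟨(MulEquiv.subgroupCongr hL).trans e⟩
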